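/- Let {N_{β0β1}}_{β0,β1 ∈ {0,1,2}} be a nine-outcome POVM on ℂ², and define B0 = Σ_{β1}(N_{0β1} − N_{1β1}), B1 = Σ_{β0}(N_{β00} − N_{β01}), T0 = Σ_{β1}(N_{0β1} + N_{1β1}), T1 = Σ_{β0}(N_{β00} + N_{β01}). Then (1/2)·Tr[Z·B0 + X·B1 − (T0 + T1)/2] ≤ 1/2. -/

import Mathlib

open Matrix ComplexOrder Finset

lemma quadre (M : Matrix (Fin 2) (Fin 2) ℂ) (h : M.PosSemidef) (x y : ℝ) :
    0 ≤ x^2 * (M 0 0).re + x*y*((M 0 1).re + (M 1 0).re) + y^2 * (M 1 1).re := by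
  have h2 := h.dotProduct_mulVec_nonneg ![(x:ℂ), (y:ℂ)]
  rw [Complex.le_def] at h2
  have := h2.1
  simp only [dotProduct, Matrix.mulVec, Fin.sum_univ_two, Pi.star_apply,
    Matrix.cons_val_zero, Matrix.cons_val_one, Matrix.head_cons, Complex.zero_re,
    Complex.add_re, Complex.mul_re, Complex.conj_re, Complex.conj_im, RCLike.star_def,
    Complex.ofReal_re, Complex.ofReal_im] at this
  nlinarith [this]

lemma trZ (M : Matrix (Fin 2) (Fin 2) ℂ) :
    ((!![1, 0; 0, -1] : Matrix (Fin 2) (Fin 2) ℂ) * M).trace = M 0 0 - M 1 1 := by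
  simp [Matrix.trace, Matrix.diag, Fin.sum_univ_two, Matrix.mul_apply]; ring

lemma trX (M : Matrix (Fin 2) (Fin 2) ℂ) :
    ((!![0, 1; 1, 0] : Matrix (Fin 2) (Fin 2) ℂ) * M).trace = M 1 0 + M 0 1 := by
  simp [Matrix.trace, Matrix.diag, Fin.sum_univ_two, Matrix.mul_apply]


/-- Joint-measurability inequality for the no-binning expression: if `B0, B1, T0, T1`
are marginals of a nine-outcome POVM on ℂ², then
`(1/2)·Tr[Z·B0 + X·B1 − (T0+T1)/2] ≤ 1/2`. -/
theorem stmt14 (N : Fin 3 → Fin 3 → Matrix (Fin 2) (Fin 2) ℂ)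
    (hpos : ∀ i j, (N i j).PosSemidef)
    (hsum : ∑ i : Fin 3, ∑ j : Fin 3, N i j = 1) :
    (1 / 2 : ℝ) *
      (((!![1, 0; 0, -1] : Matrix (Fin 2) (Fin 2) ℂ) *
          (∑ j : Fin 3, (N 0 j - N 1 j)) +
        (!![0, 1; 1, 0] : Matrix (Fin 2) (Fin 2) ℂ) *
          (∑ i : Fin 3, (N i 0 - N i 1)) -
        ((2 : ℂ))⁻¹ • ((∑ j : Fin 3, (N 0 j + N 1 j)) +
          (∑ i : Fin 3, (N i 0 + N i 1)))).trace).re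
      ≤ 1 / 2 := by
  have h2 : ((2:ℂ))⁻¹ = (((1/2 : ℝ)) : ℂ) := by norm_num
  rw [h2]
  simp only [Fin.sum_univ_three, mul_add, mul_sub, Matrix.trace_add, Matrix.trace_sub,
    Matrix.trace_smul, trZ, trX]
  simp only [Matrix.trace, Matrix.diag, Fin.sum_univ_two, smul_eq_mul]
  simp only [Complex.add_re, Complex.sub_re, Complex.re_ofReal_mul]
  have hs0 : ∑ i : Fin 3, ∑ j : Fin 3, ((N i j 0 0).re) = 1 := by
    have := congrFun (congrFun hsum 0) 0
    simp only [Matrix.sum_apply] at this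
    have := congrArg Complex.re this
    simpa [Fin.sum_univ_three] using this
  have hs1 : ∑ i : Fin 3, ∑ j : Fin 3, ((N i j 1 1).re) = 1 := by
    have := congrFun (congrFun hsum 1) 1
    simp only [Matrix.sum_apply] at this
    have := congrArg Complex.re this
    simpa [Fin.sum_univ_three] using this
  simp only [Fin.sum_univ_three] at hs0 hs1
  linarith [quadre (N 0 0) (hpos 0 0) 1 0,
    quadre (N 0 0) (hpos 0 0) 0 1,
    quadre (N 0 0) (hpos 0 0) 1 (-2),
    quadre (N 0 1) (hpos 0 1) 1 0,
    quadre (N 0 1) (hpos 0 1) 0 1,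
    quadre (N 0 1) (hpos 0 1) 1 (2),
    quadre (N 0 2) (hpos 0 2) 1 0,
    quadre (N 0 2) (hpos 0 2) 0 1,
    quadre (N 1 0) (hpos 1 0) 1 0,
    quadre (N 1 0) (hpos 1 0) 0 1,
    quadre (N 1 0) (hpos 1 0) 2 (-1),
    quadre (N 1 1) (hpos 1 1) 1 0,
    quadre (N 1 1) (hpos 1 1) 0 1,
    quadre (N 1 1) (hpos 1 1) 2 (1),
    quadre (N 1 2) (hpos 1 2) 1 0,
    quadre (N 1 2) (hpos 1 2) 0 1,
    quadre (N 2 0) (hpos 2 0) 1 0,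
    quadre (N 2 0) (hpos 2 0) 0 1,
    quadre (N 2 0) (hpos 2 0) 1 (-1),
    quadre (N 2 1) (hpos 2 1) 1 0,
    quadre (N 2 1) (hpos 2 1) 0 1,
    quadre (N 2 1) (hpos 2 1) 1 (1),
    quadre (N 2 2) (hpos 2 2) 1 0,
    quadre (N 2 2) (hpos 2 2) 0 1]
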